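/- Let R = [a₁,b₁] × ⋯ × [a_d,b_d] be a k-dimensional hyperrectangle in ℝ^d with k ≥ 1, and let δ > 0. Then there exists a nice δ-net S of R with cardinality |S| = ∏_{i=1}^{d} (⌈√k·(b_i − a_i)/(2δ)⌉ + 1). In particular, if R is (d−1)-dimensional, then |S| ≤ (√d·r/(2δ))^{d−1} for any r satisfying r ≥ max_i (b_i − a_i) and r ≥ 8·√d·δ. -/

import Mathlib

/-- A face of the hyperrectangle `∏ i, [a i, b i]`: each coordinate interval is either kept
or replaced by one of its endpoints. -/
def IsFace {d : ℕ} (a b : Fin d → ℝ) (F : Set (EuclideanSpace ℝ (Fin d))) : Prop :=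
  ∃ c : Fin d → Set ℝ,
    (∀ i, c i = Set.Icc (a i) (b i) ∨ c i = {a i} ∨ c i = {b i}) ∧
    F = {x : EuclideanSpace ℝ (Fin d) | ∀ i, x i ∈ c i}

/-- `S` is a `δ`-net of `F`: `S ⊆ F` and every point of `F` is within distance `δ` of `S`. -/
def IsDeltaNet {d : ℕ} (δ : ℝ) (F S : Set (EuclideanSpace ℝ (Fin d))) : Prop :=
  S ⊆ F ∧ ∀ y ∈ F, ∃ z ∈ S, dist y z ≤ δ

/-- `S` is a nice `δ`-net of the hyperrectangle `∏ i, [a i, b i]`. -/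
def IsNiceDeltaNet {d : ℕ} (δ : ℝ) (a b : Fin d → ℝ)
    (S : Set (EuclideanSpace ℝ (Fin d))) : Prop :=
  S ⊆ {x : EuclideanSpace ℝ (Fin d) | ∀ i, x i ∈ Set.Icc (a i) (b i)} ∧
  ∀ F : Set (EuclideanSpace ℝ (Fin d)), IsFace a b F → IsDeltaNet δ F (S ∩ F)

lemma coord_net (aa bb ε : ℝ) (m : ℕ) (hle : aa ≤ bb) (hε : 0 ≤ ε)
    (hstep : bb - aa ≤ 2 * m * ε)
    (c : Set ℝ) (hc : c = Set.Icc aa bb ∨ c = {aa} ∨ c = {bb})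
    (y : ℝ) (hy : y ∈ c) :
    ∃ j ≤ m, (aa + j * ((bb - aa)/m)) ∈ c ∧ |y - (aa + j * ((bb - aa)/m))| ≤ ε ∧
      (aa = bb → aa + j * ((bb - aa)/m) = y) := by
  rcases eq_or_lt_of_le hle with heq | hlt
  · have hy' : y = aa := by
      rcases hc with h | h | h <;> subst h
      · rw [← heq, Set.Icc_self] at hy; simpa using hy
      · simpa using hy
      · rw [heq]; simpa using hy
    refine ⟨0, Nat.zero_le _, ?_, ?_, ?_⟩
    · rcases hc with h | h | h <;> subst h <;> simp [heq, hle]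
    · simp [hy', hε]
    · intro _; simp [hy']
  · have hm : 1 ≤ m := by
      rcases Nat.eq_zero_or_pos m with h0 | h; · simp [h0] at hstep; linarith
      exact h
    have hmR : (0:ℝ) < m := by exact_mod_cast hm
    set s : ℝ := (bb - aa)/m with hs_def
    have hs : 0 < s := div_pos (by linarith) hmR
    have hsε : s ≤ 2 * ε := by
      rw [hs_def, div_le_iff₀ hmR]; linarith
    have hms : aa + m * s = bb := by have h' : (m:ℝ) * s = bb - aa := (by rw [hs_def]; field_simp); linarith
    rcases hc with h | h | h
    · subst h
      obtain ⟨hy1, hy2⟩ := hy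
      set t : ℝ := (y - aa)/s with ht_def
      have ht0 : 0 ≤ t := div_nonneg (by linarith) hs.le
      have htm : t ≤ m := by
        rw [ht_def, div_le_iff₀ hs]; nlinarith [hms]
      refine ⟨⌊t + 1/2⌋₊, ?_, ?_, ?_, ?_⟩
      · exact Nat.le_of_lt_succ (by rw [Nat.floor_lt (by linarith)]; push_cast; linarith)
      · have hjle : (⌊t + 1/2⌋₊ : ℝ) ≤ t + 1/2 := Nat.floor_le (by linarith)
        have hjm : (⌊t + 1/2⌋₊ : ℝ) ≤ m := by
          have : ⌊t + 1/2⌋₊ ≤ m :=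
            Nat.le_of_lt_succ (by rw [Nat.floor_lt (by linarith)]; push_cast; linarith)
          exact_mod_cast this
        constructor
        · nlinarith
        · nlinarith
      · have hjle : (⌊t + 1/2⌋₊ : ℝ) ≤ t + 1/2 := Nat.floor_le (by linarith)
        have hjgt : t + 1/2 < ⌊t + 1/2⌋₊ + 1 := Nat.lt_floor_add_one _
        have hyt : y = aa + t * s := by have h' : t * s = y - aa := (by rw [ht_def]; field_simp); linarith
        rw [abs_le]
        constructor <;> nlinarith
      · intro h; exact absurd h hlt.ne
    · subst h
      have hy' : y = aa := by simpa using hy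
      exact ⟨0, Nat.zero_le _, by simp, by simp [hy', hε], fun h => absurd h hlt.ne⟩
    · subst h
      have hy' : y = bb := by simpa using hy
      exact ⟨m, le_refl _, by simp [hms], by simp [hms, hy', hε], fun h => absurd h hlt.ne⟩

set_option maxHeartbeats 1600000 in
theorem stmt_13 (d k : ℕ) (hk : 1 ≤ k)
    (a b : Fin d → ℝ) (hab : ∀ i, a i ≤ b i)
    (hdim : (Finset.univ.filter fun i => a i < b i).card = k)
    (δ : ℝ) (hδ : 0 < δ) :
    ∃ S : Finset (EuclideanSpace ℝ (Fin d)),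
      IsNiceDeltaNet δ a b (S : Set (EuclideanSpace ℝ (Fin d))) ∧
      S.card = ∏ i, (⌈Real.sqrt k * (b i - a i) / (2 * δ)⌉₊ + 1) ∧
      (k = d - 1 →
        ∀ r : ℝ, (∀ i, b i - a i ≤ r) → 8 * Real.sqrt d * δ ≤ r →
          (S.card : ℝ) ≤ (Real.sqrt d * r / (2 * δ)) ^ (d - 1)) := by
  classical
  have hk0 : (0:ℝ) < Real.sqrt k := Real.sqrt_pos.2 (by exact_mod_cast hk)
  set ε : ℝ := δ / Real.sqrt k with hε_def
  have hε : 0 < ε := div_pos hδ hk0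
  set m : Fin d → ℕ := fun i => ⌈Real.sqrt k * (b i - a i) / (2 * δ)⌉₊ with hm_def
  have hstep : ∀ i, b i - a i ≤ 2 * (m i) * ε := by
    intro i
    have h1 : Real.sqrt k * (b i - a i) / (2 * δ) ≤ m i := Nat.le_ceil _
    rw [div_le_iff₀ (by linarith)] at h1
    rw [hε_def]
    rw [show 2 * (m i : ℝ) * (δ / Real.sqrt k) = ((m i) * (2 * δ)) / Real.sqrt k by ring,
      le_div_iff₀ hk0]
    nlinarith
  have hm0 : ∀ i, ¬ a i < b i → m i = 0 := by
    intro i h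
    have : b i = a i := le_antisymm (not_lt.1 h) (hab i)
    simp [hm_def, this]
  have hm1 : ∀ i, 1 ≤ m i → a i < b i := by
    intro i h
    by_contra hc
    rw [hm0 i hc] at h; omega
  -- the grid
  set pt : (Fin d → ℕ) → EuclideanSpace ℝ (Fin d) :=
    fun f => WithLp.toLp 2 (fun i => a i + f i * ((b i - a i)/(m i))) with hpt_def
  set T : Finset (Fin d → ℕ) := Fintype.piFinset fun i => Finset.range (m i + 1) with hT_def
  have hgrid : ∀ i (j : ℕ), j ≤ m i → a i ≤ a i + j * ((b i - a i)/(m i)) ∧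
      a i + j * ((b i - a i)/(m i)) ≤ b i := by
    intro i j hj
    rcases Nat.eq_zero_or_pos (m i) with h0 | h
    · have hj0 : j = 0 := by omega
      subst hj0
      simp [hab i]
    · have hiab : a i < b i := hm1 i h
      have hmR : (0:ℝ) < m i := by exact_mod_cast h
      have hjR : (j:ℝ) ≤ m i := by exact_mod_cast hj
      have hs : 0 < (b i - a i)/(m i) := div_pos (by linarith) hmR
      constructor
      · nlinarith
      · have : (j:ℝ) * ((b i - a i)/(m i)) ≤ (m i : ℝ) * ((b i - a i)/(m i)) := by nlinarith
        have heq : (m i : ℝ) * ((b i - a i)/(m i)) = b i - a i := by field_simp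
        linarith [this, heq ▸ this]
  have hinj : Set.InjOn pt T := by
    intro f hf g hg hfg
    funext i
    have h := congrArg (fun x : EuclideanSpace ℝ (Fin d) => x i) hfg
    simp only [hpt_def, PiLp.toLp_apply] at h
    rcases Nat.eq_zero_or_pos (m i) with h0 | h1
    · have hfi : f i < m i + 1 := by
        simpa using (Fintype.mem_piFinset.1 hf i)
      have hgi : g i < m i + 1 := by
        simpa using (Fintype.mem_piFinset.1 hg i)
      omega
    · have hiab : a i < b i := hm1 i h1
      have hmR : (0:ℝ) < m i := by exact_mod_cast h1
      have hs : 0 < (b i - a i)/(m i) := div_pos (by linarith) hmR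
      have : (f i : ℝ) = g i := by
        have := h
        have h2 : (f i:ℝ) * ((b i - a i)/(m i)) = g i * ((b i - a i)/(m i)) := by linarith
        exact mul_right_cancel₀ hs.ne' h2
      exact_mod_cast this
  refine ⟨T.image pt, ⟨?_, ?_⟩, ?_, ?_⟩
  · -- S ⊆ R
    intro x hx
    simp only [Finset.coe_image, Set.mem_image, Finset.mem_coe] at hx
    obtain ⟨f, hf, rfl⟩ := hx
    intro i
    have hfi : f i ≤ m i := by
      have := Fintype.mem_piFinset.1 hf i
      simp at this; omega
    exact hgrid i (f i) hfi
  · -- nice net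
    intro F hF
    obtain ⟨c, hc, rfl⟩ := hF
    refine ⟨Set.inter_subset_right, ?_⟩
    intro y hy
    have key : ∀ i, ∃ j ≤ m i, (a i + j * ((b i - a i)/(m i))) ∈ c i ∧
        |y i - (a i + j * ((b i - a i)/(m i)))| ≤ ε ∧
        (a i = b i → a i + j * ((b i - a i)/(m i)) = y i) :=
      fun i => coord_net (a i) (b i) ε (m i) (hab i) hε.le (hstep i) (c i) (hc i) (y i) (hy i)
    choose j hj1 hj2 hj3 hj4 using key
    refine ⟨pt j, ⟨?_, ?_⟩, ?_⟩
    · simp only [Finset.coe_image, Set.mem_image, Finset.mem_coe]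
      exact ⟨j, Fintype.mem_piFinset.2 fun i => by simp [Nat.lt_succ_of_le (hj1 i)], rfl⟩
    · intro i; exact hj2 i
    · have hsum : ∑ i, dist (y i) (pt j i)^2 ≤ δ^2 := by
        have hterm : ∀ i ∈ Finset.univ, dist (y i) (pt j i)^2 ≤
            if a i < b i then ε^2 else 0 := by
          intro i _
          by_cases h : a i < b i
          · simp only [if_pos h]
            have h3 := hj3 i
            rw [Real.dist_eq]
            exact pow_le_pow_left₀ (abs_nonneg _) h3 2
          · simp only [if_neg h]
            have heq : a i = b i := le_antisymm (hab i) (not_lt.1 h)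
            have := hj4 i heq
            simp [hpt_def, PiLp.toLp_apply, Real.dist_eq, this]
        calc ∑ i, dist (y i) (pt j i)^2 ≤ ∑ i, (if a i < b i then ε^2 else 0) :=
              Finset.sum_le_sum hterm
          _ = ∑ i ∈ Finset.univ.filter (fun i => a i < b i), ε^2 :=
              (Finset.sum_filter _ _).symm
          _ = k * ε^2 := by rw [Finset.sum_const, hdim]; simp [nsmul_eq_mul]
          _ = δ^2 := by
              rw [hε_def, div_pow, Real.sq_sqrt (by positivity : (0:ℝ) ≤ (k:ℝ))]
              field_simp
      calc dist y (pt j) = Real.sqrt (∑ i, dist (y i) (pt j i)^2) :=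
            EuclideanSpace.dist_eq y (pt j)
        _ ≤ Real.sqrt (δ^2) := Real.sqrt_le_sqrt hsum
        _ = δ := Real.sqrt_sq hδ.le
  · -- cardinality
    rw [Finset.card_image_of_injOn hinj, hT_def, Fintype.card_piFinset]
    simp; rfl
  · -- the bound
    intro hkd r hr hrδ
    have hd2 : 2 ≤ d := by omega
    have hsd : (0:ℝ) < Real.sqrt d := Real.sqrt_pos.2 (by positivity)
    set s : ℝ := Real.sqrt d with hs_def
    set t : ℝ := Real.sqrt k with ht_def
    have hs2 : s^2 = d := Real.sq_sqrt (by positivity)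
    have ht2 : t^2 = (d:ℝ) - 1 := by
      rw [ht_def, Real.sq_sqrt (by positivity)]
      have : (k:ℝ) = (d:ℝ) - 1 := by
        have : ((d - 1 : ℕ) : ℝ) = (d:ℝ) - 1 := by
          have : 1 ≤ d := by omega
          push_cast [Nat.cast_sub this]; ring
        rw [hkd, this]
      exact this
    have hts : t ≤ s := by
      rw [ht_def, hs_def]
      apply Real.sqrt_le_sqrt
      have : k ≤ d := by omega
      exact_mod_cast this
    have hrpos : 0 < r := lt_of_lt_of_le (by positivity) hrδ
    have hkey : t * r / (2*δ) + 2 ≤ s * r / (2*δ) := by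
      rw [div_add' _ _ _ (by positivity), div_le_div_iff₀ (by positivity) (by positivity)]
      have h1 : s^2 - t^2 = 1 := by rw [hs2, ht2]; ring
      have h2 : 0 ≤ s - t := by linarith
      have h3 : (s - t) * r ≥ (s - t) * (8 * s * δ) :=
        mul_le_mul_of_nonneg_left hrδ h2
      have h4 : 1 ≤ 2 * s * (s - t) := by nlinarith [sq_nonneg (s - t)]
      have h5 : 4 * δ ≤ (s - t) * (8 * s * δ) := by nlinarith [hδ]
      nlinarith [hδ]
    have hfac : ∀ i ∈ Finset.univ.filter (fun i => a i < b i),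
        ((m i : ℝ) + 1) ≤ s * r / (2*δ) := by
      intro i _
      have h0 : (0:ℝ) ≤ Real.sqrt k * (b i - a i) / (2 * δ) :=
        div_nonneg (mul_nonneg (Real.sqrt_nonneg _) (sub_nonneg.2 (hab i))) (by linarith)
      have hce : (m i : ℝ) < Real.sqrt k * (b i - a i) / (2 * δ) + 1 :=
        Nat.ceil_lt_add_one h0
      have hbr : Real.sqrt k * (b i - a i) / (2 * δ) ≤ t * r / (2*δ) :=
        div_le_div_of_nonneg_right (mul_le_mul_of_nonneg_left (hr i) hk0.le) (by linarith)
      linarith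
    have hsplit := Finset.prod_filter_mul_prod_filter_not Finset.univ
      (fun i => a i < b i) (fun i => ((m i : ℝ) + 1))
    have hcompl : ∏ i ∈ Finset.univ.filter (fun i => ¬ a i < b i), ((m i : ℝ) + 1) = 1 := by
      apply Finset.prod_eq_one
      intro i hi
      rw [hm0 i (Finset.mem_filter.1 hi).2]
      norm_num
    have hfilter : ∏ i ∈ Finset.univ.filter (fun i => a i < b i), ((m i : ℝ) + 1) ≤
        (s * r / (2*δ)) ^ (d - 1) := by
      calc ∏ i ∈ Finset.univ.filter (fun i => a i < b i), ((m i : ℝ) + 1)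
          ≤ ∏ _i ∈ Finset.univ.filter (fun i => a i < b i), (s * r / (2*δ)) :=
            Finset.prod_le_prod (fun i _ => by positivity) hfac
        _ = (s * r / (2*δ)) ^ (d - 1) := by
            rw [Finset.prod_const, hdim, hkd]
    have hcast : ((∏ i, (m i + 1) : ℕ) : ℝ) = ∏ i, ((m i : ℝ) + 1) := by
      push_cast; rfl
    rw [Finset.card_image_of_injOn hinj, hT_def, Fintype.card_piFinset]
    simp only [Finset.card_range]
    rw [hcast]
    calc ∏ i, ((m i : ℝ) + 1)
        = (∏ i ∈ Finset.univ.filter (fun i => a i < b i), ((m i : ℝ) + 1)) *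
          (∏ i ∈ Finset.univ.filter (fun i => ¬ a i < b i), ((m i : ℝ) + 1)) := hsplit.symm
      _ ≤ (s * r / (2*δ)) ^ (d - 1) := by rw [hcompl, mul_one]; exact hfilter
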